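/- Let T ≥ 1 and let y_1,…,y_T ∈ [0,1]. For each t let g_t ∈ [−M, M] be a subgradient at ŷ_t of the convex map x ↦ ℓ(x, y_t) on [0,1] (that is, ℓ(x, y_t) ≥ ℓ(ŷ_t, y_t) + g_t·(x − ŷ_t) for all x ∈ [0,1]), let η_t = √(log 2)/(M·√t), and let the predictions be defined recursively by ŷ_t = exp(−η_t·∑_{s=1}^{t−1} g_s) / (1 + exp(−η_t·∑_{s=1}^{t−1} g_s)). Then ∑_{t=1}^T ℓ(ŷ_t, y_t) ≤ inf_{y ∈ [0,1]} ∑_{t=1}^T ℓ(y, y_t) + 2M·√(T·log 2). -/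

import Mathlib

-- A: quadratic bound on exp(-v) for v ≥ 0
lemma auxA {v : ℝ} (hv : 0 ≤ v) : Real.exp (-v) ≤ 1 - v + v^2/2 := by
  have key : MonotoneOn (fun v : ℝ => 1 - v + v^2/2 - Real.exp (-v)) (Set.Ici 0) := by
    apply monotoneOn_of_deriv_nonneg (convex_Ici 0)
    · fun_prop
    · intro x hx
      apply DifferentiableAt.differentiableWithinAt
      fun_prop
    · intro x hx
      rw [interior_Ici] at hx
      have : deriv (fun v : ℝ => 1 - v + v^2/2 - Real.exp (-v)) x
          = -1 + x + Real.exp (-x) := by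
        rw [show (fun v : ℝ => 1 - v + v^2/2 - Real.exp (-v))
            = fun v : ℝ => 1 - v + v^2/2 - Real.exp (-v) from rfl]
        have h1 : HasDerivAt (fun v : ℝ => Real.exp (-v)) (-Real.exp (-x)) x := by
          simpa [Function.comp_def] using (Real.hasDerivAt_exp (-x)).comp x (hasDerivAt_neg x)
        have h2 : HasDerivAt (fun v : ℝ => 1 - v + v^2/2 - Real.exp (-v))
            (0 - 1 + (2:ℕ) * x^(2-1)/2 - (-Real.exp (-x))) x :=
          (((hasDerivAt_const x (1:ℝ)).sub (hasDerivAt_id' x)).add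
            (((hasDerivAt_pow 2 x).div_const 2))).sub h1
        rw [h2.deriv]; ring
      rw [this]
      have := Real.add_one_le_exp (-x)
      nlinarith [Real.exp_pos (-x)]
  have h0 : (0:ℝ) ∈ Set.Ici (0:ℝ) := Set.mem_Ici.2 le_rfl
  have := key h0 (Set.mem_Ici.2 hv) hv
  simp at this
  nlinarith [this]

-- B: key per-step inequality
lemma auxB {p u : ℝ} (hp0 : 0 ≤ p) (hp1 : p ≤ 1) :
    1 - p + p * Real.exp u ≤ Real.exp (p*u + u^2/2) := by
  rcases le_or_gt u 0 with hu | hu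
  · have h1 : 1 + p * (Real.exp u - 1) ≤ Real.exp (p * (Real.exp u - 1)) := by
      have := Real.add_one_le_exp (p * (Real.exp u - 1)); linarith
    have h2 : Real.exp u ≤ 1 + u + u^2/2 := by
      have := auxA (v := -u) (by linarith)
      simpa using (by simpa using this : Real.exp u ≤ 1 - (-u) + (-u)^2/2)
    have h3 : Real.exp u - 1 - u ≥ 0 := by nlinarith [Real.add_one_le_exp u]
    have h4 : p * (Real.exp u - 1) ≤ p*u + u^2/2 := by nlinarith
    calc 1 - p + p * Real.exp u = 1 + p * (Real.exp u - 1) := by ring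
      _ ≤ Real.exp (p * (Real.exp u - 1)) := h1
      _ ≤ Real.exp (p*u + u^2/2) := Real.exp_le_exp.2 h4
  · have h1 : 1 + (1-p) * (Real.exp (-u) - 1) ≤ Real.exp ((1-p) * (Real.exp (-u) - 1)) := by
      have := Real.add_one_le_exp ((1-p) * (Real.exp (-u) - 1)); linarith
    have h2 : Real.exp (-u) ≤ 1 - u + u^2/2 := auxA hu.le
    have h3 : Real.exp (-u) - 1 + u ≥ 0 := by nlinarith [Real.add_one_le_exp (-u)]
    have h4 : u + (1-p) * (Real.exp (-u) - 1) ≤ p*u + u^2/2 := by nlinarith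
    have hexp : 1 - p + p * Real.exp u
        = Real.exp u * (1 + (1-p) * (Real.exp (-u) - 1)) := by
      have := Real.exp_neg u
      have h := Real.exp_ne_zero u
      field_simp [this]
      have hk : Real.exp u * Real.exp (-u) = 1 := by rw [← Real.exp_add]; simp
      linear_combination (p - 1) * hk
    calc 1 - p + p * Real.exp u
        = Real.exp u * (1 + (1-p) * (Real.exp (-u) - 1)) := hexp
      _ ≤ Real.exp u * Real.exp ((1-p) * (Real.exp (-u) - 1)) := by
          apply mul_le_mul_of_nonneg_left h1 (Real.exp_pos u).le
      _ = Real.exp (u + (1-p) * (Real.exp (-u) - 1)) := (Real.exp_add _ _).symm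
      _ ≤ Real.exp (p*u + u^2/2) := Real.exp_le_exp.2 h4

-- C: power-mean for two points
lemma auxC {s t : ℝ} (hs : 0 < s) (ht0 : 0 < t) (ht1 : t ≤ 1) :
    (1 + s ^ t)/2 ≤ ((1 + s)/2) ^ t := by
  have hc := Real.concaveOn_rpow ht0.le ht1
  have := hc.2 (Set.mem_Ici.2 (zero_le_one)) (Set.mem_Ici.2 hs.le)
    (by norm_num : (0:ℝ) ≤ 1/2) (by norm_num : (0:ℝ) ≤ 1/2) (by norm_num)
  simp only [smul_eq_mul] at this
  calc (1 + s^t)/2 = 1/2 * (1:ℝ)^t + 1/2 * s^t := by rw [Real.one_rpow]; ring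
    _ ≤ (1/2 * 1 + 1/2 * s) ^ t := this
    _ = ((1+s)/2) ^ t := by ring_nf



-- D: monotonicity of potential in η
lemma auxD {e' e G : ℝ} (he' : 0 < e') (hee : e' ≤ e) :
    (1/e') * Real.log ((1 + Real.exp (-e' * G))/2)
      ≤ (1/e) * Real.log ((1 + Real.exp (-e * G))/2) := by
  have he : 0 < e := lt_of_lt_of_le he' hee
  set s : ℝ := Real.exp (-e * G) with hs
  have hspos : 0 < s := Real.exp_pos _
  set t : ℝ := e'/e with ht
  have ht0 : 0 < t := div_pos he' he
  have ht1 : t ≤ 1 := (div_le_one he).2 hee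
  have hst : s ^ t = Real.exp (-e' * G) := by
    rw [Real.rpow_def_of_pos hspos, Real.log_exp]
    congr 1
    rw [ht]; field_simp
  have h1 : (1 + Real.exp (-e' * G))/2 ≤ ((1 + s)/2) ^ t := by
    rw [← hst]; exact auxC hspos ht0 ht1
  have h2 : Real.log ((1 + Real.exp (-e' * G))/2) ≤ t * Real.log ((1 + s)/2) := by
    have hpos : (0:ℝ) < (1 + Real.exp (-e' * G))/2 := by positivity
    calc Real.log ((1 + Real.exp (-e' * G))/2) ≤ Real.log (((1 + s)/2) ^ t) :=
          Real.log_le_log hpos h1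
      _ = t * Real.log ((1 + s)/2) := Real.log_rpow (by positivity) t
  have := mul_le_mul_of_nonneg_left h2 (le_of_lt (one_div_pos.2 he'))
  calc (1/e') * Real.log ((1 + Real.exp (-e' * G))/2)
      ≤ (1/e') * (t * Real.log ((1 + s)/2)) := this
    _ = (1/e) * Real.log ((1 + s)/2) := by
        rw [ht]; field_simp
  
-- E: sum of 1/sqrt t
lemma auxE (n : ℕ) : ∑ t ∈ Finset.Icc 1 n, (1 / Real.sqrt t) ≤ 2 * Real.sqrt n := by
  induction n with
  | zero => simp
  | succ n ih =>
    have hins : Finset.Icc 1 (n+1) = insert (n+1) (Finset.Icc 1 n) := by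
      ext x; simp [Finset.mem_Icc]; omega
    have hnot : (n+1) ∉ Finset.Icc 1 n := by simp
    rw [hins, Finset.sum_insert hnot]
    have key : 1 / Real.sqrt (n+1) ≤ 2 * Real.sqrt (n+1) - 2 * Real.sqrt n := by
      set a := Real.sqrt n with ha
      set b := Real.sqrt (n+1) with hb
      have ha0 : 0 ≤ a := Real.sqrt_nonneg _
      have hb0 : 0 < b := Real.sqrt_pos.2 (by positivity)
      have ha2 : a^2 = n := Real.sq_sqrt (by positivity)
      have hb2 : b^2 = (n:ℝ)+1 := by
        rw [hb, Real.sq_sqrt (show (0:ℝ) ≤ (n:ℝ)+1 by positivity)]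
      rw [div_le_iff₀ hb0]
      nlinarith [sq_nonneg (a - b)]
    push_cast
    linarith [ih, key]


-- final potential bound
lemma phi_final {E Gt : ℝ} (hE : 0 < E) :
    -(1/E) * Real.log ((1 + Real.exp (-E*Gt))/2) ≤ min 0 Gt + Real.log 2 / E := by
  rcases le_total 0 Gt with h | h
  · have h1 : (1:ℝ)/2 ≤ (1 + Real.exp (-E*Gt))/2 := by
      have := Real.exp_pos (-E*Gt); linarith
    have h2 : Real.log (1/2) ≤ Real.log ((1 + Real.exp (-E*Gt))/2) :=
      Real.log_le_log (by norm_num) h1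
    rw [min_eq_left h]
    have hlog : Real.log (1/2) = -Real.log 2 := by
      rw [Real.log_div one_ne_zero (by norm_num), Real.log_one]; ring
    rw [hlog] at h2
    have := mul_le_mul_of_nonneg_left h2 (le_of_lt (one_div_pos.2 hE))
    calc -(1/E) * Real.log ((1 + Real.exp (-E*Gt))/2)
        ≤ -(1/E) * (-Real.log 2) := by nlinarith
      _ = 0 + Real.log 2 / E := by field_simp; ring
  · have h1 : Real.exp (-E*Gt)/2 ≤ (1 + Real.exp (-E*Gt))/2 := by linarith
    have h2 : Real.log (Real.exp (-E*Gt)/2) ≤ Real.log ((1 + Real.exp (-E*Gt))/2) :=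
      Real.log_le_log (by positivity) h1
    rw [min_eq_right h]
    have hlog : Real.log (Real.exp (-E*Gt)/2) = -E*Gt - Real.log 2 := by
      rw [Real.log_div (Real.exp_ne_zero _) (by norm_num), Real.log_exp]
    rw [hlog] at h2
    have := mul_le_mul_of_nonneg_left h2 (le_of_lt (one_div_pos.2 hE))
    have hE' : E ≠ 0 := ne_of_gt hE
    calc -(1/E) * Real.log ((1 + Real.exp (-E*Gt))/2)
        ≤ -(1/E) * (-E*Gt - Real.log 2) := by nlinarith
      _ = Gt + Real.log 2 / E := by field_simp; ring



lemma eg_step {M E Gp a : ℝ} (hM : 0 < M) (hE : 0 < E) (ha : |a| ≤ M) :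
    a * (Real.exp (-E*Gp) / (1 + Real.exp (-E*Gp))) +
      (1/E) * Real.log ((1 + Real.exp (-E*(Gp+a)))/2)
    ≤ (1/E) * Real.log ((1 + Real.exp (-E*Gp))/2) + E * M^2/2 := by
  set A : ℝ := Real.exp (-E*Gp) with hA
  have hApos : 0 < A := Real.exp_pos _
  have h1A : 0 < 1 + A := by linarith
  set p : ℝ := A / (1+A) with hp
  have hp0 : 0 ≤ p := by positivity
  have hp1 : p ≤ 1 := by rw [hp, div_le_one h1A]; linarith
  set u : ℝ := -E*a with hu
  have hexp : Real.exp (-E*(Gp+a)) = A * Real.exp u := by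
    rw [hA, hu, ← Real.exp_add]; congr 1; ring
  have hBpos : 0 < (1-p) + p * Real.exp u := by
    have h1p : 0 < 1 - p := by
      rw [hp]; have : A/(1+A) < 1 := (div_lt_one h1A).2 (by linarith)
      linarith
    have := Real.exp_pos u
    nlinarith
  have hW : (1 + A * Real.exp u)/2 = ((1+A)/2) * ((1-p) + p * Real.exp u) := by
    rw [hp]; field_simp; ring
  have hlogB : Real.log ((1-p) + p * Real.exp u) ≤ p*u + u^2/2 := by
    rw [Real.log_le_iff_le_exp hBpos]
    exact auxB hp0 hp1
  have hsplit : Real.log ((1 + Real.exp (-E*(Gp+a)))/2)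
      = Real.log ((1+A)/2) + Real.log ((1-p) + p * Real.exp u) := by
    rw [hexp, hW, Real.log_mul (by positivity) (ne_of_gt hBpos)]
  rw [hsplit]
  have h2 : (1/E) * Real.log ((1-p) + p * Real.exp u) ≤ (1/E) * (p*u + u^2/2) :=
    mul_le_mul_of_nonneg_left hlogB (by positivity)
  have h3 : (1/E) * (p*u + u^2/2) = -(a*p) + E * a^2/2 := by
    rw [hu]; field_simp
  have ha2 : a^2 ≤ M^2 := by
    have := abs_le.mp ha; nlinarith
  have h4 : E * a^2/2 ≤ E * M^2/2 := by nlinarith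
  linarith

lemma eg_master (M : ℝ) (hM : 0 < M) (g yhat e : ℕ → ℝ) (T : ℕ)
    (he : ∀ t, 1 ≤ t → 0 < e t)
    (hdec : ∀ t, 1 ≤ t → e (t+1) ≤ e t)
    (hg : ∀ t, 1 ≤ t → t ≤ T → |g t| ≤ M)
    (hyhat : ∀ t, 1 ≤ t → t ≤ T → yhat t =
      Real.exp (-(e t) * ∑ s ∈ Finset.Icc 1 (t-1), g s) /
      (1 + Real.exp (-(e t) * ∑ s ∈ Finset.Icc 1 (t-1), g s))) :
    ∀ n, n ≤ T →
      ∑ t ∈ Finset.Icc 1 n, g t * yhat t ≤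
        -(1/(e n)) * Real.log ((1 + Real.exp (-(e n) * ∑ s ∈ Finset.Icc 1 n, g s))/2)
        + M^2/2 * ∑ t ∈ Finset.Icc 1 n, e t := by
  intro n
  induction n with
  | zero => intro _; simp
  | succ n ih =>
    intro hn
    have hn' : n ≤ T := by omega
    have hIH := ih hn'
    have hE : 0 < e (n+1) := he (n+1) (by omega)
    have hins : Finset.Icc 1 (n+1) = insert (n+1) (Finset.Icc 1 n) := by
      ext x; simp [Finset.mem_Icc]; omega
    have hnot : (n+1) ∉ Finset.Icc 1 n := by simp
    set Gn : ℝ := ∑ s ∈ Finset.Icc 1 n, g s with hGn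
    rw [hins, Finset.sum_insert hnot, Finset.sum_insert hnot, Finset.sum_insert hnot]
    have hmono : -(1/(e n)) * Real.log ((1 + Real.exp (-(e n) * Gn))/2)
        ≤ -(1/(e (n+1))) * Real.log ((1 + Real.exp (-(e (n+1)) * Gn))/2) := by
      rcases Nat.eq_zero_or_pos n with h0 | h0
      · subst h0
        have : Gn = 0 := by simp [hGn]
        simp [this]
      · linarith [auxD (G := Gn) hE (hdec n h0)]
    have hyh : yhat (n+1) = Real.exp (-(e (n+1)) * Gn) / (1 + Real.exp (-(e (n+1)) * Gn)) := by
      have := hyhat (n+1) (by omega) hn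
      simpa using this
    have hstep := eg_step (M := M) (E := e (n+1)) (Gp := Gn) (a := g (n+1))
      hM hE (hg (n+1) (by omega) hn)
    rw [hyh]
    rw [show g (n+1) + Gn = Gn + g (n+1) from add_comm _ _]
    linarith



/-- Lemma 2: regret bound of the gradient-based exponentially weighted average forecaster
(EG) with the two constant experts `0` and `1`. Here `g t` is a subgradient at `yhat t` of
`x ↦ ℓ(x, y t)` on `[0,1]`, bounded by `M`, the learning rates are
`η t = √(log 2)/(M √t)`, and the predictions follow the exponential-weights formula. -/
theorem stmt_3 (T : ℕ) (hT : 1 ≤ T) (M : ℝ) (hM : 0 < M)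
    (ℓ : ℝ → ℝ → ℝ)
    (hℓ_val : ∀ x ∈ Set.Icc (0:ℝ) 1, ∀ y ∈ Set.Icc (0:ℝ) 1, ℓ x y ∈ Set.Icc (0:ℝ) 1)
    (hℓ_conv : ∀ y ∈ Set.Icc (0:ℝ) 1, ConvexOn ℝ (Set.Icc (0:ℝ) 1) (fun x => ℓ x y))
    (y : ℕ → ℝ) (hy : ∀ t, y t ∈ Set.Icc (0:ℝ) 1)
    (yhat : ℕ → ℝ) (g : ℕ → ℝ)
    -- `g t` is a subgradient at `yhat t`, bounded by `M` in absolute value: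
    (hg_bdd : ∀ t, 1 ≤ t → t ≤ T → g t ∈ Set.Icc (-M) M)
    (hg_subgrad : ∀ t, 1 ≤ t → t ≤ T → ∀ x ∈ Set.Icc (0:ℝ) 1,
      ℓ (yhat t) (y t) + g t * (x - yhat t) ≤ ℓ x (y t))
    -- the EG predictions:
    (hyhat : ∀ t, 1 ≤ t → t ≤ T →
      yhat t = Real.exp (-(Real.sqrt (Real.log 2) / (M * Real.sqrt t)) *
              ∑ s ∈ Finset.Icc 1 (t - 1), g s) /
            (1 + Real.exp (-(Real.sqrt (Real.log 2) / (M * Real.sqrt t)) *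
              ∑ s ∈ Finset.Icc 1 (t - 1), g s))) :
    ∑ t ∈ Finset.Icc 1 T, ℓ (yhat t) (y t) ≤
      sInf {S : ℝ | ∃ c ∈ Set.Icc (0:ℝ) 1, S = ∑ t ∈ Finset.Icc 1 T, ℓ c (y t)}
        + 2 * M * Real.sqrt (T * Real.log 2) := by
  have hlog2 : 0 < Real.log 2 := Real.log_pos (by norm_num)
  have hsq2 : 0 < Real.sqrt (Real.log 2) := Real.sqrt_pos.2 hlog2
  -- the learning rates
  have he : ∀ t : ℕ, 1 ≤ t → 0 < Real.sqrt (Real.log 2) / (M * Real.sqrt t) := by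
    intro t ht
    have : (0:ℝ) < Real.sqrt t := Real.sqrt_pos.2 (by exact_mod_cast ht)
    positivity
  have hdec : ∀ t : ℕ, 1 ≤ t →
      Real.sqrt (Real.log 2) / (M * Real.sqrt (t+1:ℕ)) ≤
      Real.sqrt (Real.log 2) / (M * Real.sqrt t) := by
    intro t ht
    have h1 : (0:ℝ) < Real.sqrt t := Real.sqrt_pos.2 (by exact_mod_cast ht)
    have h2 : Real.sqrt (t:ℝ) ≤ Real.sqrt ((t:ℕ)+1:ℕ) := by
      apply Real.sqrt_le_sqrt; push_cast; linarith
    gcongr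
  have hgabs : ∀ t, 1 ≤ t → t ≤ T → |g t| ≤ M := by
    intro t h1 h2
    have := hg_bdd t h1 h2
    rw [abs_le]; exact ⟨this.1, this.2⟩
  have hmaster := eg_master M hM g yhat
    (fun t => Real.sqrt (Real.log 2) / (M * Real.sqrt t)) T he hdec hgabs
    (fun t h1 h2 => hyhat t h1 h2) T le_rfl
  beta_reduce at hmaster
  set GT : ℝ := ∑ s ∈ Finset.Icc 1 T, g s with hGT
  have heT : 0 < Real.sqrt (Real.log 2) / (M * Real.sqrt T) := he T hT
  have hphi := phi_final (Gt := GT) heT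
  have hsqT : 0 < Real.sqrt T := Real.sqrt_pos.2 (by exact_mod_cast hT)
  have hsplitsqrt : Real.sqrt (T * Real.log 2) = Real.sqrt T * Real.sqrt (Real.log 2) :=
    Real.sqrt_mul (by positivity) _
  -- bound 1 : log 2 / e T = M √(T log 2)
  have hb1 : Real.log 2 / (Real.sqrt (Real.log 2) / (M * Real.sqrt T))
      = M * Real.sqrt (T * Real.log 2) := by
    rw [hsplitsqrt]
    have hsq : Real.sqrt (Real.log 2) * Real.sqrt (Real.log 2) = Real.log 2 :=
      Real.mul_self_sqrt hlog2.le
    field_simp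
    linear_combination (-1) * hsq
  -- bound 2 : M²/2 ∑ e ≤ M √(T log 2)
  have hb2 : M^2/2 * ∑ t ∈ Finset.Icc 1 T, Real.sqrt (Real.log 2) / (M * Real.sqrt t)
      ≤ M * Real.sqrt (T * Real.log 2) := by
    have hsum : ∑ t ∈ Finset.Icc 1 T, Real.sqrt (Real.log 2) / (M * Real.sqrt t)
        = (Real.sqrt (Real.log 2) / M) * ∑ t ∈ Finset.Icc 1 T, (1 / Real.sqrt t) := by
      rw [Finset.mul_sum]
      apply Finset.sum_congr rfl
      intro t _
      rw [div_mul_div_comm, mul_one]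
    rw [hsum, hsplitsqrt]
    have h1 := auxE T
    have h2 : 0 ≤ Real.sqrt (Real.log 2) / M := by positivity
    calc M^2/2 * ((Real.sqrt (Real.log 2) / M) * ∑ t ∈ Finset.Icc 1 T, (1 / Real.sqrt t))
        ≤ M^2/2 * ((Real.sqrt (Real.log 2) / M) * (2 * Real.sqrt T)) := by
          apply mul_le_mul_of_nonneg_left _ (by positivity)
          exact mul_le_mul_of_nonneg_left h1 h2
      _ = M * (Real.sqrt T * Real.sqrt (Real.log 2)) := by
          field_simp
  have hcore : ∑ t ∈ Finset.Icc 1 T, g t * yhat t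
      ≤ min 0 GT + 2 * (M * Real.sqrt (T * Real.log 2)) := by
    have := hmaster
    have h2 : -(1/(Real.sqrt (Real.log 2) / (M * Real.sqrt T))) *
        Real.log ((1 + Real.exp (-(Real.sqrt (Real.log 2) / (M * Real.sqrt T)) * GT))/2)
        ≤ min 0 GT + M * Real.sqrt (T * Real.log 2) := by
      have := hphi
      rw [div_eq_mul_one_div (Real.log 2)] at this
      calc -(1/(Real.sqrt (Real.log 2) / (M * Real.sqrt T))) *
          Real.log ((1 + Real.exp (-(Real.sqrt (Real.log 2) / (M * Real.sqrt T)) * GT))/2)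
          ≤ min 0 GT + Real.log 2 / (Real.sqrt (Real.log 2) / (M * Real.sqrt T)) := hphi
        _ = min 0 GT + M * Real.sqrt (T * Real.log 2) := by rw [hb1]
    linarith
  -- the regret bound against any constant c
  have hreg : ∀ c ∈ Set.Icc (0:ℝ) 1,
      ∑ t ∈ Finset.Icc 1 T, ℓ (yhat t) (y t) ≤
        (∑ t ∈ Finset.Icc 1 T, ℓ c (y t)) + 2 * M * Real.sqrt (T * Real.log 2) := by
    intro c hc
    have hsum1 : ∑ t ∈ Finset.Icc 1 T, ℓ (yhat t) (y t)
        ≤ ∑ t ∈ Finset.Icc 1 T, (ℓ c (y t) + g t * yhat t - g t * c) := by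
      apply Finset.sum_le_sum
      intro t ht
      rw [Finset.mem_Icc] at ht
      have hs := hg_subgrad t ht.1 ht.2 c hc
      have : g t * (c - yhat t) = g t * c - g t * yhat t := by ring
      linarith
    have hsum2 : ∑ t ∈ Finset.Icc 1 T, (ℓ c (y t) + g t * yhat t - g t * c)
        = (∑ t ∈ Finset.Icc 1 T, ℓ c (y t)) + (∑ t ∈ Finset.Icc 1 T, g t * yhat t)
          - c * GT := by
      rw [hGT, Finset.sum_sub_distrib, Finset.sum_add_distrib, Finset.mul_sum]
      congr 1
      apply Finset.sum_congr rfl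
      intro t _; ring
    have hmin : min 0 GT ≤ c * GT := by
      rcases le_total 0 GT with h | h
      · calc min 0 GT ≤ 0 := min_le_left _ _
          _ ≤ c * GT := mul_nonneg hc.1 h
      · calc min 0 GT ≤ GT := min_le_right _ _
          _ ≤ c * GT := by nlinarith [hc.1, hc.2]
    calc ∑ t ∈ Finset.Icc 1 T, ℓ (yhat t) (y t)
        ≤ (∑ t ∈ Finset.Icc 1 T, ℓ c (y t)) + (∑ t ∈ Finset.Icc 1 T, g t * yhat t)
          - c * GT := by rw [← hsum2]; exact hsum1
      _ ≤ (∑ t ∈ Finset.Icc 1 T, ℓ c (y t)) + (min 0 GT + 2 * (M * Real.sqrt (T * Real.log 2)))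
          - c * GT := by linarith [hcore]
      _ ≤ (∑ t ∈ Finset.Icc 1 T, ℓ c (y t)) + 2 * M * Real.sqrt (T * Real.log 2) := by
          have := hmin; linarith
  -- conclude via sInf
  have hne : {S : ℝ | ∃ c ∈ Set.Icc (0:ℝ) 1, S = ∑ t ∈ Finset.Icc 1 T, ℓ c (y t)}.Nonempty := by
    exact ⟨∑ t ∈ Finset.Icc 1 T, ℓ 0 (y t), 0, ⟨le_rfl, zero_le_one⟩, rfl⟩
  have hlb : ∀ b ∈ {S : ℝ | ∃ c ∈ Set.Icc (0:ℝ) 1, S = ∑ t ∈ Finset.Icc 1 T, ℓ c (y t)},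
      (∑ t ∈ Finset.Icc 1 T, ℓ (yhat t) (y t)) - 2 * M * Real.sqrt (T * Real.log 2) ≤ b := by
    rintro b ⟨c, hc, rfl⟩
    linarith [hreg c hc]
  have := le_csInf hne hlb
  linarith
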